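/- For the symmetric group S_n with Coxeter generators s_1,...,s_{n-1} (adjacent transpositions), define t_i := s_i s_{i-1} ... s_1 for 1 ≤ i ≤ n-1 (and t_0 := identity). Every permutation π ∈ S_n has a unique representation π = t_{n-1}^{k_{n-1}} t_{n-2}^{k_{n-2}} ... t_1^{k_1} with 0 ≤ k_i ≤ i for all i, and for this representation one has maj(π) = k_1 + k_2 + ... + k_{n-1}, where maj(π) is the sum of all indices 1 ≤ i < n with π(i) > π(i+1). -/

import Mathlib

namespace SymMaj

/-- `sP i` is the adjacent transposition `s_i = (i, i+1)` (1-indexed),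
i.e. the swap of the 0-indexed positions `i-1` and `i`; junk value `1` outside range. -/
def sP {n : ℕ} (i : ℕ) : Equiv.Perm (Fin n) :=
  if h : 0 < i ∧ i < n then Equiv.swap ⟨i - 1, by omega⟩ ⟨i, h.2⟩ else 1

/-- `tP i = s_i * s_{i-1} * ⋯ * s_1`; in particular `tP 0 = 1`. -/
def tP {n : ℕ} (i : ℕ) : Equiv.Perm (Fin n) :=
  ((List.range i).map (fun j => (sP (i - j) : Equiv.Perm (Fin n)))).prod

/-- `repP k = tP (n-1) ^ k (n-1) * ⋯ * tP 1 ^ k 1 * tP 0 ^ k 0`. -/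
def repP {n : ℕ} (k : Fin n → ℕ) : Equiv.Perm (Fin n) :=
  (List.ofFn (fun i : Fin n => (tP (i : ℕ) : Equiv.Perm (Fin n)) ^ k i)).reverse.prod

/-- The major index: sum of all 1-indexed `i`, `1 ≤ i < n`, with `π(i) > π(i+1)`. -/
def majP {n : ℕ} (π : Equiv.Perm (Fin n)) : ℕ :=
  ∑ i ∈ Finset.range n, if h : i + 1 < n then
    (if π ⟨i + 1, h⟩ < π ⟨i, by omega⟩ then i + 1 else 0) else 0


lemma sP_apply {n : ℕ} {i : ℕ} (h1 : 0 < i) (h2 : i < n) (x : Fin n) :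
    sP i x = if x.val = i - 1 then ⟨i, h2⟩ else if x.val = i then ⟨i - 1, by omega⟩ else x := by
  unfold sP
  rw [dif_pos ⟨h1, h2⟩, Equiv.swap_apply_def]
  simp only [Fin.ext_iff, apply_ite (Fin.val)]

lemma tP_zero {n : ℕ} : (tP 0 : Equiv.Perm (Fin n)) = 1 := by
  unfold tP; simp

lemma tP_succ {n : ℕ} (i : ℕ) : (tP (i+1) : Equiv.Perm (Fin n)) = sP (i+1) * tP i := by
  unfold tP
  rw [List.range_succ_eq_map, List.map_cons, List.map_map, List.prod_cons]
  simp [Function.comp_def, Nat.succ_sub_succ]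

lemma tP_apply {n : ℕ} {i : ℕ} (hi : i < n) (x : Fin n) :
    (tP i : Equiv.Perm (Fin n)) x =
      if x.val = 0 then ⟨i, hi⟩ else if x.val ≤ i then ⟨x.val - 1, by omega⟩ else x := by
  induction i with
  | zero =>
    rw [tP_zero]
    split_ifs with a b
    · exact Fin.ext a
    · omega
    · rfl
  | succ i ih =>
    have hi' : i < n := by omega
    rw [tP_succ, Equiv.Perm.mul_apply, ih hi']
    rw [sP_apply (by omega) hi]
    simp only [Fin.ext_iff, apply_ite (Fin.val)]
    split_ifs <;> omega

lemma tP_pow_fix {n : ℕ} {m : ℕ} (hm : m < n) (k : ℕ) (x : Fin n) (hx : m < x.val) :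
    ((tP m : Equiv.Perm (Fin n)) ^ k) x = x := by
  induction k with
  | zero => simp
  | succ k ih =>
    rw [pow_succ, Equiv.Perm.mul_apply, tP_apply hm, if_neg (by omega), if_neg (by omega), ih]

lemma tP_pow_apply_self {n : ℕ} {m : ℕ} (hm : m < n) {k : ℕ} (hk : k ≤ m) :
    ((tP m : Equiv.Perm (Fin n)) ^ k) ⟨m, hm⟩ = ⟨m - k, by omega⟩ := by
  induction k with
  | zero => simp
  | succ k ih =>
    rw [pow_succ', Equiv.Perm.mul_apply, ih (by omega), tP_apply hm,
      if_neg (by simp; omega), if_pos (by simp)]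
    simp [Fin.ext_iff]
    omega

lemma majP_one {n : ℕ} : majP (1 : Equiv.Perm (Fin n)) = 0 := by
  unfold majP
  refine Finset.sum_eq_zero fun i _ => ?_
  split_ifs with h1 h2
  · exact absurd h2 (by simp [Fin.lt_def])
  · rfl
  · rfl

def desTerm {n : ℕ} (σ : Equiv.Perm (Fin n)) (i : ℕ) : ℕ :=
  if h : i + 1 < n then (if σ ⟨i + 1, h⟩ < σ ⟨i, Nat.lt_of_succ_lt h⟩ then i + 1 else 0) else 0

lemma majP_eq_sum {n : ℕ} (σ : Equiv.Perm (Fin n)) :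
    majP σ = ∑ i ∈ Finset.range n, desTerm σ i := rfl

/-- One application of `tP m` (subtracting 1 mod m+1 on values) raises maj by 1. -/
lemma maj_step {n m : ℕ} (hmn : m < n) (τ : Equiv.Perm (Fin n))
    (hfix : ∀ x : Fin n, m < x.val → τ x = x)
    (h0 : (τ ⟨m, hmn⟩).val ≠ 0) :
    majP (tP m * τ) = majP τ + 1 := by
  have hn0 : 0 < n := by omega
  set π := (tP m : Equiv.Perm (Fin n)) * τ with hπdef
  set p : Fin n := τ⁻¹ ⟨0, hn0⟩ with hpdef
  have hτp : τ p = ⟨0, hn0⟩ := τ.apply_symm_apply _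
  have hne : ∀ x : Fin n, x ≠ p → (τ x).val ≠ 0 := by
    intro x hx h
    apply hx
    have hτx : τ x = ⟨0, hn0⟩ := Fin.ext h
    exact τ.injective (hτx.trans hτp.symm)
  have hplt : p.val < m := by
    by_contra hcon
    push_neg at hcon
    rcases eq_or_lt_of_le hcon with h | h
    · apply h0
      have : (⟨m, hmn⟩ : Fin n) = p := Fin.ext h
      rw [this, hτp]
    · have h2 := hfix p h
      have h3 : p = (⟨0, hn0⟩ : Fin n) := h2.symm.trans hτp
      have := congrArg Fin.val h3
      simp at this
      omega
  have B : ∀ x : Fin n, x.val ≤ m → (τ x).val ≤ m := by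
    intro x hx
    by_contra h
    push_neg at h
    have h2 := hfix (τ x) h
    have := τ.injective h2
    omega
  have hπ_eq : ∀ x : Fin n, π x =
      if (τ x).val = 0 then ⟨m, hmn⟩ else if (τ x).val ≤ m then ⟨(τ x).val - 1, by omega⟩
      else τ x := fun x => tP_apply hmn (τ x)
  have hv : ∀ x : Fin n, (τ x).val ≠ 0 →
      (π x).val = if (τ x).val ≤ m then (τ x).val - 1 else (τ x).val := by
    intro x hx
    rw [hπ_eq x, if_neg hx]
    split_ifs <;> rfl
  have M : ∀ x y : Fin n, (τ x).val ≠ 0 → (τ y).val ≠ 0 →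
      ((π y).val < (π x).val ↔ (τ y).val < (τ x).val) := by
    intro x y hx hy
    have ex := hv x hx
    have ey := hv y hy
    split_ifs at ex ey <;> omega
  have hπp : π p = ⟨m, hmn⟩ := by rw [hπ_eq p, if_pos (by rw [hτp])]
  -- the pointwise bookkeeping identity
  have key : ∀ i ∈ Finset.range n,
      desTerm π i + (if i + 1 = p.val then p.val else 0)
      = desTerm τ i + (if i = p.val then p.val + 1 else 0) := by
    intro i hi
    rw [Finset.mem_range] at hi
    unfold desTerm
    by_cases hip : i = p.val
    · have h1 : i + 1 < n := by omega
      have e1 : (⟨i, Nat.lt_of_succ_lt h1⟩ : Fin n) = p := Fin.ext hip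
      have hπi : (π ⟨i, Nat.lt_of_succ_lt h1⟩).val = m := by rw [e1, hπp]
      have hτi : (τ ⟨i, Nat.lt_of_succ_lt h1⟩).val = 0 := by rw [e1, hτp]
      have hne1 : (τ ⟨i + 1, h1⟩).val ≠ 0 := hne _ (by
        intro hc; have := congrArg Fin.val hc; simp at this; omega)
      have hle1 : (τ ⟨i + 1, h1⟩).val ≤ m := B _ (by simp; omega)
      have hv1 : (π ⟨i + 1, h1⟩).val < m := by
        have := hv _ hne1; rw [if_pos hle1] at this; omega
      rw [dif_pos h1, dif_pos h1,
        if_pos (show π ⟨i + 1, h1⟩ < π ⟨i, Nat.lt_of_succ_lt h1⟩ from Fin.lt_def.mpr (by omega)),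
        if_neg (show ¬ i + 1 = p.val by omega),
        if_neg (show ¬ τ ⟨i + 1, h1⟩ < τ ⟨i, Nat.lt_of_succ_lt h1⟩ from fun hc => by
          rw [Fin.lt_def] at hc; omega),
        if_pos hip]
      omega
    · by_cases hip1 : i + 1 = p.val
      · have h1 : i + 1 < n := by omega
        have e1 : (⟨i + 1, h1⟩ : Fin n) = p := Fin.ext hip1
        have hπ1 : (π ⟨i + 1, h1⟩).val = m := by rw [e1, hπp]
        have hτ1 : (τ ⟨i + 1, h1⟩).val = 0 := by rw [e1, hτp]
        have hnei : (τ ⟨i, Nat.lt_of_succ_lt h1⟩).val ≠ 0 := hne _ (by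
          intro hc; have := congrArg Fin.val hc; simp at this; omega)
        have hlei : (τ ⟨i, Nat.lt_of_succ_lt h1⟩).val ≤ m := B _ (by simp; omega)
        have hvi : (π ⟨i, Nat.lt_of_succ_lt h1⟩).val < m := by
          have := hv _ hnei; rw [if_pos hlei] at this; omega
        rw [dif_pos h1, dif_pos h1,
          if_neg (show ¬ π ⟨i + 1, h1⟩ < π ⟨i, Nat.lt_of_succ_lt h1⟩ from fun hc => by
            rw [Fin.lt_def] at hc; omega),
          if_pos hip1,
          if_pos (show τ ⟨i + 1, h1⟩ < τ ⟨i, Nat.lt_of_succ_lt h1⟩ from Fin.lt_def.mpr (by omega)),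
          if_neg hip]
        omega
      · rw [if_neg hip1, if_neg hip]
        simp only [Nat.add_zero]
        by_cases h1 : i + 1 < n
        · rw [dif_pos h1, dif_pos h1]
          have hnei : (τ ⟨i, Nat.lt_of_succ_lt h1⟩).val ≠ 0 := hne _ (by
            intro hc; have := congrArg Fin.val hc; simp at this; omega)
          have hne1 : (τ ⟨i + 1, h1⟩).val ≠ 0 := hne _ (by
            intro hc; have := congrArg Fin.val hc; simp at this; omega)
          have hM := M ⟨i, Nat.lt_of_succ_lt h1⟩ ⟨i + 1, h1⟩ hnei hne1
          by_cases hc : τ ⟨i + 1, h1⟩ < τ ⟨i, Nat.lt_of_succ_lt h1⟩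
          · rw [if_pos (show π ⟨i + 1, h1⟩ < π ⟨i, Nat.lt_of_succ_lt h1⟩ from
              Fin.lt_def.mpr (hM.mpr (Fin.lt_def.mp hc))), if_pos hc]
          · rw [if_neg (show ¬ π ⟨i + 1, h1⟩ < π ⟨i, Nat.lt_of_succ_lt h1⟩ from fun hx =>
              hc (Fin.lt_def.mpr (hM.mp (Fin.lt_def.mp hx)))), if_neg hc]
        · rw [dif_neg h1, dif_neg h1]
  have s1 : ∑ i ∈ Finset.range n, (if i + 1 = p.val then p.val else 0) = p.val := by
    rcases Nat.eq_zero_or_pos p.val with hp | hp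
    · rw [Finset.sum_eq_zero (fun i _ => by rw [if_neg (by omega)]), hp]
    · rw [Finset.sum_congr rfl
        (fun i _ => if_congr (by omega : (i + 1 = p.val) ↔ (i = p.val - 1)) rfl rfl),
        Finset.sum_ite_eq' (Finset.range n) (p.val - 1) (fun _ => p.val),
        if_pos (Finset.mem_range.mpr (by omega))]
  have s2 : ∑ i ∈ Finset.range n, (if i = p.val then p.val + 1 else 0) = p.val + 1 := by
    rw [Finset.sum_ite_eq' (Finset.range n) p.val (fun _ => p.val + 1),
      if_pos (Finset.mem_range.mpr p.isLt)]
  have hsum := Finset.sum_congr rfl key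
  rw [Finset.sum_add_distrib, Finset.sum_add_distrib, s1, s2] at hsum
  rw [majP_eq_sum, majP_eq_sum]
  omega

lemma maj_pow {n m : ℕ} (hmn : m < n) (σ : Equiv.Perm (Fin n))
    (hσ : ∀ x : Fin n, m ≤ x.val → σ x = x) :
    ∀ k : ℕ, k ≤ m → majP ((tP m : Equiv.Perm (Fin n)) ^ k * σ) = majP σ + k := by
  intro k
  induction k with
  | zero => intro _; rw [pow_zero, one_mul, Nat.add_zero]
  | succ k ih =>
    intro hk
    rw [pow_succ', mul_assoc]
    have hfix : ∀ x : Fin n, m < x.val → ((tP m : Equiv.Perm (Fin n)) ^ k * σ) x = x := by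
      intro x hx
      rw [Equiv.Perm.mul_apply, hσ x (by omega), tP_pow_fix hmn k x hx]
    have h0 : (((tP m : Equiv.Perm (Fin n)) ^ k * σ) ⟨m, hmn⟩).val ≠ 0 := by
      rw [Equiv.Perm.mul_apply, hσ _ (le_refl m), tP_pow_apply_self hmn (by omega)]
      simp; omega
    rw [maj_step hmn _ hfix h0, ih (by omega)]
    omega
def RP {n : ℕ} (m : ℕ) (k : Fin n → ℕ) : Equiv.Perm (Fin n) :=
  ((List.range m).map (fun j =>
    if h : j < n then (tP j : Equiv.Perm (Fin n)) ^ k ⟨j, h⟩ else 1)).reverse.prod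

lemma RP_zero {n : ℕ} (k : Fin n → ℕ) : RP 0 k = 1 := by
  unfold RP; simp

lemma RP_succ {n : ℕ} (m : ℕ) (k : Fin n → ℕ) :
    RP (m + 1) k = (if h : m < n then (tP m : Equiv.Perm (Fin n)) ^ k ⟨m, h⟩ else 1) * RP m k := by
  unfold RP
  rw [List.range_succ, List.map_append, List.reverse_append]
  simp

lemma repP_eq_RP {n : ℕ} (k : Fin n → ℕ) : repP k = RP n k := by
  unfold repP RP
  congr 2
  apply List.ext_getElem
  · simp
  · intro i h1 h2
    simp only [List.length_ofFn] at h1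
    simp only [List.getElem_ofFn, List.getElem_map, List.getElem_range, dif_pos h1]

lemma RP_congr {n : ℕ} (m : ℕ) (k k' : Fin n → ℕ)
    (h : ∀ i : Fin n, (i : ℕ) < m → k i = k' i) : RP m k = RP m k' := by
  induction m with
  | zero => rw [RP_zero, RP_zero]
  | succ m ih =>
    rw [RP_succ, RP_succ, ih (fun i hi => h i (by omega))]
    congr 1
    split_ifs with hmn
    · rw [h ⟨m, hmn⟩ (by simp)]
    · rfl

lemma RP_fix {n : ℕ} (m : ℕ) (k : Fin n → ℕ) (x : Fin n) (hx : m ≤ x.val) :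
    RP m k x = x := by
  induction m with
  | zero => rw [RP_zero]; rfl
  | succ m ih =>
    rw [RP_succ, Equiv.Perm.mul_apply, ih (by omega)]
    split_ifs with hmn
    · exact tP_pow_fix hmn _ x (by omega)
    · rfl

lemma RP_top {n m : ℕ} (hmn : m < n) (k : Fin n → ℕ) (hk : k ⟨m, hmn⟩ ≤ m) :
    RP (m + 1) k ⟨m, hmn⟩ = ⟨m - k ⟨m, hmn⟩, by omega⟩ := by
  rw [RP_succ, dif_pos hmn, Equiv.Perm.mul_apply, RP_fix m k _ (le_refl m),
    tP_pow_apply_self hmn hk]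

lemma exist_maj {n : ℕ} : ∀ (m : ℕ), m ≤ n → ∀ π : Equiv.Perm (Fin n),
    (∀ x : Fin n, m ≤ x.val → π x = x) →
    ∃ k : Fin n → ℕ, (∀ i : Fin n, k i ≤ (i : ℕ)) ∧ (∀ i : Fin n, m ≤ (i : ℕ) → k i = 0) ∧
      π = RP m k ∧ majP π = ∑ i : Fin n, k i := by
  intro m
  induction m with
  | zero =>
    intro _ π hπ
    have hπ1 : π = 1 := Equiv.ext fun x => hπ x (Nat.zero_le _)
    exact ⟨fun _ => 0, fun i => Nat.zero_le _, fun i _ => rfl,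
      by rw [hπ1, RP_zero], by rw [hπ1, majP_one]; simp⟩
  | succ m ih =>
    intro hm π hπ
    have hmn : m < n := hm
    have hπm : (π ⟨m, hmn⟩).val ≤ m := by
      by_contra h
      push_neg at h
      have h2 := hπ (π ⟨m, hmn⟩) (by omega)
      have := π.injective h2
      have := congrArg Fin.val this
      simp at this
      omega
    set km := m - (π ⟨m, hmn⟩).val with hkm
    have hπm' : π ⟨m, hmn⟩ = ⟨m - km, by omega⟩ := Fin.ext (by simp [hkm]; omega)
    set σ := ((tP m : Equiv.Perm (Fin n)) ^ km)⁻¹ * π with hσdef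
    have hσ : ∀ x : Fin n, m ≤ x.val → σ x = x := by
      intro x hx
      rcases eq_or_lt_of_le hx with h | h
      · have hxm : x = ⟨m, hmn⟩ := Fin.ext h.symm
        rw [hσdef, Equiv.Perm.mul_apply, hxm, hπm',
          ← tP_pow_apply_self hmn (by omega : km ≤ m), Equiv.Perm.inv_def, Equiv.symm_apply_apply]
      · rw [hσdef, Equiv.Perm.mul_apply, hπ x (by omega)]
        have := tP_pow_fix hmn km x h
        nth_rewrite 1 [← this]
        rw [Equiv.Perm.inv_def, Equiv.symm_apply_apply]
    obtain ⟨k₀, hb, hz, hrep, hmaj⟩ := ih (by omega) σ hσ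
    refine ⟨Function.update k₀ ⟨m, hmn⟩ km, ?_, ?_, ?_, ?_⟩
    · intro i
      rcases eq_or_ne i ⟨m, hmn⟩ with h | h
      · rw [h, Function.update_self]
        simp; omega
      · rw [Function.update_of_ne h]; exact hb i
    · intro i hi
      have h : i ≠ ⟨m, hmn⟩ := by
        intro hc; rw [hc] at hi; simp at hi
      rw [Function.update_of_ne h]
      exact hz i (by omega)
    · rw [RP_succ, dif_pos hmn, Function.update_self,
        RP_congr m _ k₀ (fun i hi => Function.update_of_ne
          (by intro hc; have := congrArg Fin.val hc; simp at this; omega) _ _),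
        ← hrep, hσdef]
      rw [← mul_assoc, mul_inv_cancel, one_mul]
    · have hπσ : π = (tP m : Equiv.Perm (Fin n)) ^ km * σ := by
        rw [hσdef, ← mul_assoc, mul_inv_cancel, one_mul]
      rw [hπσ, maj_pow hmn σ hσ km (by omega), hmaj]
      rw [Finset.sum_update_of_mem (Finset.mem_univ _)]
      rw [Finset.sdiff_singleton_eq_erase, Finset.sum_erase _ (hz ⟨m, hmn⟩ (le_refl m))]
      omega

lemma uniq {n : ℕ} : ∀ (m : ℕ), m ≤ n → ∀ k k' : Fin n → ℕ,
    (∀ i : Fin n, k i ≤ (i : ℕ)) → (∀ i : Fin n, m ≤ (i : ℕ) → k i = 0) →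
    (∀ i : Fin n, k' i ≤ (i : ℕ)) → (∀ i : Fin n, m ≤ (i : ℕ) → k' i = 0) →
    RP m k = RP m k' → ∀ i : Fin n, k i = k' i := by
  intro m
  induction m with
  | zero =>
    intro _ k k' _ h0 _ h0' _ i
    rw [h0 i (Nat.zero_le _), h0' i (Nat.zero_le _)]
  | succ m ih =>
    intro hm k k' hb h0 hb' h0' heq
    have hmn : m < n := hm
    have e1 := RP_top hmn k (hb ⟨m, hmn⟩)
    have e2 := RP_top hmn k' (hb' ⟨m, hmn⟩)
    rw [heq, e2] at e1
    have ekm : k ⟨m, hmn⟩ = k' ⟨m, hmn⟩ := by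
      have := congrArg Fin.val e1
      simp at this
      have h1 := hb ⟨m, hmn⟩
      have h2 := hb' ⟨m, hmn⟩
      simp at h1 h2
      omega
    have heq' : RP m k = RP m k' := by
      have h3 := heq
      rw [RP_succ, RP_succ, dif_pos hmn, dif_pos hmn, ekm] at h3
      exact mul_left_cancel h3
    intro i
    rcases eq_or_ne i ⟨m, hmn⟩ with h | h
    · rw [h]; exact ekm
    · have hiv : i.val ≠ m := fun hc => h (Fin.ext hc)
      have hbU : ∀ j : Fin n, Function.update k ⟨m, hmn⟩ 0 j ≤ (j : ℕ) := by
        intro j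
        rcases eq_or_ne j ⟨m, hmn⟩ with hj | hj
        · rw [hj, Function.update_self]; exact Nat.zero_le _
        · rw [Function.update_of_ne hj]; exact hb j
      have hbU' : ∀ j : Fin n, Function.update k' ⟨m, hmn⟩ 0 j ≤ (j : ℕ) := by
        intro j
        rcases eq_or_ne j ⟨m, hmn⟩ with hj | hj
        · rw [hj, Function.update_self]; exact Nat.zero_le _
        · rw [Function.update_of_ne hj]; exact hb' j
      have hzU : ∀ j : Fin n, m ≤ (j : ℕ) → Function.update k ⟨m, hmn⟩ 0 j = 0 := by
        intro j hj
        rcases eq_or_ne j ⟨m, hmn⟩ with hje | hje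
        · rw [hje, Function.update_self]
        · have : j.val ≠ m := fun hc => hje (Fin.ext hc)
          rw [Function.update_of_ne hje]
          exact h0 j (by omega)
      have hzU' : ∀ j : Fin n, m ≤ (j : ℕ) → Function.update k' ⟨m, hmn⟩ 0 j = 0 := by
        intro j hj
        rcases eq_or_ne j ⟨m, hmn⟩ with hje | hje
        · rw [hje, Function.update_self]
        · have : j.val ≠ m := fun hc => hje (Fin.ext hc)
          rw [Function.update_of_ne hje]
          exact h0' j (by omega)
      have hcong : ∀ j : Fin n, (j : ℕ) < m → Function.update k ⟨m, hmn⟩ 0 j = k j := by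
        intro j hj
        exact Function.update_of_ne (fun hc => by
          have := congrArg Fin.val hc; simp at this; omega) _ _
      have hcong' : ∀ j : Fin n, (j : ℕ) < m → Function.update k' ⟨m, hmn⟩ 0 j = k' j := by
        intro j hj
        exact Function.update_of_ne (fun hc => by
          have := congrArg Fin.val hc; simp at this; omega) _ _
      have := ih (by omega) _ _ hbU hzU hbU' hzU'
        (by rw [RP_congr m _ k hcong, RP_congr m _ k' hcong']; exact heq') i
      rwa [Function.update_of_ne h, Function.update_of_ne h] at this

/-- every `π ∈ S_n` has a unique representation
`π = t_{n-1}^{k_{n-1}} ⋯ t_1^{k_1}` with `0 ≤ k_i ≤ i`, and for this representation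
`maj(π) = k_1 + ⋯ + k_{n-1}`. -/
theorem flag_decomposition_gives_major (n : ℕ) (π : Equiv.Perm (Fin n)) :
    (∃! k : Fin n → ℕ, (∀ i : Fin n, k i ≤ (i : ℕ)) ∧ π = repP k) ∧
    (∀ k : Fin n → ℕ, (∀ i : Fin n, k i ≤ (i : ℕ)) → π = repP k →
      majP π = ∑ i : Fin n, k i) := by
  have hvac : ∀ x : Fin n, n ≤ x.val → π x = x := fun x hx => absurd x.isLt (by omega)
  obtain ⟨k₀, hb₀, hz₀, hrep₀, hmaj₀⟩ := exist_maj n le_rfl π hvac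
  have huniq : ∀ k : Fin n → ℕ, (∀ i : Fin n, k i ≤ (i : ℕ)) → π = repP k →
      ∀ i : Fin n, k i = k₀ i := by
    intro k hk hr
    refine uniq n le_rfl k k₀ hk (fun j hj => absurd j.isLt (by omega)) hb₀
      (fun j hj => absurd j.isLt (by omega)) ?_
    rw [← repP_eq_RP, ← hr, hrep₀]
  constructor
  · refine ⟨k₀, ⟨hb₀, by rw [repP_eq_RP]; exact hrep₀⟩, ?_⟩
    rintro k ⟨hk, hr⟩
    funext i
    exact huniq k hk hr i
  · intro k hk hr
    rw [hmaj₀]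
    exact Finset.sum_congr rfl (fun i _ => (huniq k hk hr i).symm)


end SymMaj
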